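/- Let μ be a Borel probability measure on SL_d(ℤ) and ν a Borel probability measure on the torus T^d = ℝ^d/ℤ^d. Suppose |\widehat{μ*ν}(a₀)| ≥ t₀ > 0 for some a₀ ∈ ℤ^d. Then for any integer k ≥ 1, the set A = { g ∈ Mat_d(ℤ) : |\hat{ν}(a₀ g)| ≥ t₀^{2k}/2 } satisfies (μ^{⊞k} ⊟ μ^{⊞k})(A) ≥ t₀^{2k}/2. -/

import Mathlib

open MeasureTheory
open scoped ComplexConjugate

instance matIntMeasurableSpace {d : ℕ} : MeasurableSpace (Matrix (Fin d) (Fin d) ℤ) :=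
  inferInstanceAs (MeasurableSpace (Fin d → Fin d → ℤ))

/-- The character of the torus `T^d` indexed by `a ∈ ℤ^d`, i.e. `x ↦ e(⟨a, x⟩)`. -/
noncomputable def torusChar {d : ℕ} (a : Fin d → ℤ) (x : Fin d → AddCircle (1 : ℝ)) : ℂ :=
  ∏ i, fourier (a i) (x i)

/-- The Fourier coefficient of a measure `ν` on `T^d` at `a ∈ ℤ^d`. -/
noncomputable def torusFourier {d : ℕ} (ν : Measure (Fin d → AddCircle (1 : ℝ)))
    (a : Fin d → ℤ) : ℂ :=
  ∫ x, torusChar a x ∂ν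

/-- The linear action of an integer matrix on the torus `T^d`. -/
noncomputable def torusAct {d : ℕ} (g : Matrix (Fin d) (Fin d) ℤ) (x : Fin d → AddCircle (1 : ℝ)) :
    Fin d → AddCircle (1 : ℝ) :=
  fun i => ∑ j, g i j • x j

/-- Additive convolution of two measures on `Mat_d(ℤ)`. -/
noncomputable def matAddConv {d : ℕ} (μ ν : Measure (Matrix (Fin d) (Fin d) ℤ)) :
    Measure (Matrix (Fin d) (Fin d) ℤ) :=
  (μ.prod ν).map fun p => p.1 + p.2

/-- Convolution by difference on `Mat_d(ℤ)`. -/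
noncomputable def matSubConv {d : ℕ} (μ ν : Measure (Matrix (Fin d) (Fin d) ℤ)) :
    Measure (Matrix (Fin d) (Fin d) ℤ) :=
  (μ.prod ν).map fun p => p.1 - p.2

/-- `k`-fold additive convolution power (`matAddConvPow μ k = μ^{⊞k}` for `k ≥ 1`). -/
noncomputable def matAddConvPow {d : ℕ} (μ : Measure (Matrix (Fin d) (Fin d) ℤ)) :
    ℕ → Measure (Matrix (Fin d) (Fin d) ℤ)
  | 0 => Measure.dirac 0
  | n + 1 => matAddConv μ (matAddConvPow μ n)

instance matIntCountable {d : ℕ} : Countable (Matrix (Fin d) (Fin d) ℤ) :=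
  inferInstanceAs (Countable (Fin d → Fin d → ℤ))

instance matIntMeasurableSingletonClass {d : ℕ} :
    MeasurableSingletonClass (Matrix (Fin d) (Fin d) ℤ) :=
  inferInstanceAs (MeasurableSingletonClass (Fin d → Fin d → ℤ))

section Aux

variable {d : ℕ}

local notation "Md" => Matrix (Fin d) (Fin d) ℤ
local notation "Td" => (Fin d → AddCircle (1 : ℝ))

lemma norm_fourier' (n : ℤ) (x : AddCircle (1:ℝ)) : ‖fourier n x‖ = 1 := by
  rw [fourier_apply, Circle.norm_coe]

lemma norm_torusChar (a : Fin d → ℤ) (x : Td) : ‖torusChar a x‖ = 1 := by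
  rw [torusChar, norm_prod]
  simp [norm_fourier', Circle.norm_coe]

lemma fourier_add_arg (n : ℤ) (x y : AddCircle (1:ℝ)) :
    fourier n (x + y) = fourier n x * fourier n y := by
  simp_rw [fourier_apply, smul_add, AddCircle.toCircle_add, Circle.coe_mul]

lemma fourier_smul_arg (n m : ℤ) (x : AddCircle (1:ℝ)) :
    fourier n (m • x) = fourier (n * m) x := by
  rw [fourier_apply, fourier_apply, smul_smul]

lemma fourier_sum_arg {ι : Type*} (s : Finset ι) (f : ι → AddCircle (1:ℝ)) (n : ℤ) :
    fourier n (∑ i ∈ s, f i) = ∏ i ∈ s, fourier n (f i) := by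
  classical
  induction s using Finset.induction with
  | empty => simp
  | insert _ _ h ih => rw [Finset.sum_insert h, Finset.prod_insert h, fourier_add_arg, ih]

lemma fourier_sum_index {ι : Type*} (s : Finset ι) (n : ι → ℤ) (x : AddCircle (1:ℝ)) :
    fourier (∑ i ∈ s, n i) x = ∏ i ∈ s, fourier (n i) x := by
  classical
  induction s using Finset.induction with
  | empty => simp
  | insert _ _ h ih => rw [Finset.sum_insert h, Finset.prod_insert h, fourier_add, ih]

lemma torusChar_add (a b : Fin d → ℤ) (x : Td) :
    torusChar (a + b) x = torusChar a x * torusChar b x := by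
  rw [torusChar, torusChar, torusChar, ← Finset.prod_mul_distrib]
  exact Finset.prod_congr rfl fun i _ => by rw [Pi.add_apply, fourier_add]

lemma torusChar_zero (x : Td) : torusChar 0 x = 1 := by
  simp [torusChar]

lemma torusChar_neg (a : Fin d → ℤ) (x : Td) :
    torusChar (-a) x = conj (torusChar a x) := by
  rw [torusChar, torusChar, map_prod]
  exact Finset.prod_congr rfl fun i _ => by rw [Pi.neg_apply, fourier_neg]

lemma torusChar_sub (a b : Fin d → ℤ) (x : Td) :
    torusChar (a - b) x = torusChar a x * conj (torusChar b x) := by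
  rw [sub_eq_add_neg, torusChar_add, torusChar_neg]

lemma torusChar_act (a : Fin d → ℤ) (g : Md) (x : Td) :
    torusChar a (torusAct g x) = torusChar (Matrix.vecMul a g) x := by
  rw [torusChar, torusChar]
  have h1 : ∀ i, fourier (a i) (torusAct g x i) = ∏ j, fourier (a i * g i j) (x j) := by
    intro i
    rw [torusAct, fourier_sum_arg]
    exact Finset.prod_congr rfl fun j _ => fourier_smul_arg _ _ _
  simp_rw [h1]
  rw [Finset.prod_comm]
  refine Finset.prod_congr rfl fun j _ => ?_
  rw [Matrix.vecMul, dotProduct, fourier_sum_index]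

lemma continuous_torusChar (a : Fin d → ℤ) : Continuous (torusChar a) :=
  continuous_finset_prod _ fun i _ => (fourier (a i)).continuous.comp (continuous_apply i)

lemma continuous_torusAct (g : Md) : Continuous (torusAct g) :=
  continuous_pi fun i => continuous_finset_sum _ fun j _ =>
    (continuous_zsmul (g i j)).comp (continuous_apply j)

lemma measurable_matFun {X : Type*} [MeasurableSpace X] (f : Md → X) : Measurable f :=
  measurable_of_countable f

lemma measurable_uncurry_countable_fst {X Y Z : Type*} [MeasurableSpace X] [MeasurableSpace Z]
    [MeasurableSpace Y] [Countable Y] [MeasurableSingletonClass Y]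
    (F : Y → X → Z) (hF : ∀ g, Measurable (F g)) :
    Measurable fun p : Y × X => F p.1 p.2 := by
  have h : Measurable fun p : X × Y => F p.2 p.1 :=
    measurable_from_prod_countable_left fun g => hF g
  exact h.comp measurable_swap

lemma measurable_H (a : Fin d → ℤ) :
    Measurable fun p : Md × Td => torusChar (Matrix.vecMul a p.1) p.2 :=
  measurable_uncurry_countable_fst (fun g x => torusChar (Matrix.vecMul a g) x)
    (fun g => (continuous_torusChar _).measurable)

lemma integrable_H (a : Fin d → ℤ) (σ : Measure Md) (ν : Measure Td)
    [IsFiniteMeasure σ] [IsFiniteMeasure ν] :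
    Integrable (fun p : Md × Td => torusChar (Matrix.vecMul a p.1) p.2) (σ.prod ν) := by
  refine (integrable_const (1:ℝ)).mono' (measurable_H a).aestronglyMeasurable ?_
  exact Filter.Eventually.of_forall fun p => by rw [norm_torusChar]

instance probAddConv (σ τ : Measure Md) [IsProbabilityMeasure σ] [IsProbabilityMeasure τ] :
    IsProbabilityMeasure (matAddConv σ τ) :=
  Measure.isProbabilityMeasure_map (measurable_of_countable _).aemeasurable

instance probSubConv (σ τ : Measure Md) [IsProbabilityMeasure σ] [IsProbabilityMeasure τ] :
    IsProbabilityMeasure (matSubConv σ τ) :=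
  Measure.isProbabilityMeasure_map (measurable_of_countable _).aemeasurable

instance probPow (μ : Measure Md) [IsProbabilityMeasure μ] (n : ℕ) :
    IsProbabilityMeasure (matAddConvPow μ n) := by
  induction n with
  | zero => exact (by infer_instance : IsProbabilityMeasure (Measure.dirac (0:Md)))
  | succ n ih => exact probAddConv μ (matAddConvPow μ n)

lemma psi_addConv (a : Fin d → ℤ) (σ τ : Measure Md) [SFinite σ] [SFinite τ] (x : Td) :
    (∫ g, torusChar (Matrix.vecMul a g) x ∂(matAddConv σ τ)) =
      (∫ g, torusChar (Matrix.vecMul a g) x ∂σ) * ∫ g, torusChar (Matrix.vecMul a g) x ∂τ := by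
  rw [matAddConv, integral_map (measurable_of_countable _).aemeasurable
    (measurable_matFun _).aestronglyMeasurable]
  simp_rw [Matrix.vecMul_add, torusChar_add]
  exact integral_prod_mul (fun g => torusChar (Matrix.vecMul a g) x)
    (fun g => torusChar (Matrix.vecMul a g) x)

lemma psi_subConv (a : Fin d → ℤ) (σ τ : Measure Md) [SFinite σ] [SFinite τ] (x : Td) :
    (∫ g, torusChar (Matrix.vecMul a g) x ∂(matSubConv σ τ)) =
      (∫ g, torusChar (Matrix.vecMul a g) x ∂σ) *
        conj (∫ g, torusChar (Matrix.vecMul a g) x ∂τ) := by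
  rw [matSubConv, integral_map (measurable_of_countable _).aemeasurable
    (measurable_matFun _).aestronglyMeasurable]
  simp_rw [Matrix.vecMul_sub, torusChar_sub]
  rw [show (∫ p : (Matrix (Fin d) (Fin d) ℤ) × (Matrix (Fin d) (Fin d) ℤ),
      torusChar (Matrix.vecMul a p.1) x * conj (torusChar (Matrix.vecMul a p.2) x) ∂σ.prod τ) =
      (∫ g, torusChar (Matrix.vecMul a g) x ∂σ) *
        ∫ g, conj (torusChar (Matrix.vecMul a g) x) ∂τ from
    integral_prod_mul (fun g => torusChar (Matrix.vecMul a g) x)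
      (fun g => conj (torusChar (Matrix.vecMul a g) x)), ← integral_conj]

lemma psi_pow (a : Fin d → ℤ) (μ : Measure Md) [IsProbabilityMeasure μ] (n : ℕ) (x : Td) :
    (∫ g, torusChar (Matrix.vecMul a g) x ∂(matAddConvPow μ n)) =
      (∫ g, torusChar (Matrix.vecMul a g) x ∂μ) ^ n := by
  induction n with
  | zero =>
    rw [matAddConvPow, integral_dirac, Matrix.vecMul_zero, torusChar_zero, pow_zero]
  | succ n ih =>
    haveI := probPow μ n
    rw [matAddConvPow, psi_addConv, ih, pow_succ, mul_comm]

end Aux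

/-- Additive structure of large Fourier coefficients: if `|\widehat{μ*ν}(a₀)| ≥ t₀ > 0`,
then the set `A = {g : |\hat{ν}(a₀ g)| ≥ t₀^{2k}/2}` has `(μ^{⊞k} ⊟ μ^{⊞k})(A) ≥ t₀^{2k}/2`. -/
theorem stmt4 {d : ℕ} (μ : Measure (Matrix (Fin d) (Fin d) ℤ)) [IsProbabilityMeasure μ]
    (hSL : μ {g | g.det ≠ 1} = 0)
    (ν : Measure (Fin d → AddCircle (1 : ℝ))) [IsProbabilityMeasure ν]
    (a₀ : Fin d → ℤ) (t₀ : ℝ) (ht₀ : 0 < t₀)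
    (hbig : t₀ ≤ ‖torusFourier ((μ.prod ν).map fun p => torusAct p.1 p.2) a₀‖)
    (k : ℕ) (hk : 1 ≤ k) :
    ENNReal.ofReal (t₀ ^ (2 * k) / 2) ≤
      matSubConv (matAddConvPow μ k) (matAddConvPow μ k)
        {g | t₀ ^ (2 * k) / 2 ≤ ‖torusFourier ν (Matrix.vecMul a₀ g)‖} := by
  classical
  set Md := Matrix (Fin d) (Fin d) ℤ
  set Td := (Fin d → AddCircle (1 : ℝ))
  set φ : Td → ℂ := fun x => ∫ g, torusChar (Matrix.vecMul a₀ g) x ∂μ with hφ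
  set SS := matSubConv (matAddConvPow μ k) (matAddConvPow μ k) with hSS
  haveI : IsProbabilityMeasure SS := probSubConv _ _
  -- strong measurability of φ
  have hφsm : StronglyMeasurable φ := by
    have hF : ∀ g : Md, Measurable fun x : Td => torusChar (Matrix.vecMul a₀ g) x :=
      fun g => (continuous_torusChar _).measurable
    have h1 : Measurable fun p : Td × Md => torusChar (Matrix.vecMul a₀ p.2) p.1 :=
      measurable_from_prod_countable_left hF
    exact h1.stronglyMeasurable.integral_prod_right'
  have hφ1 : ∀ x, ‖φ x‖ ≤ 1 := by
    intro x
    calc ‖φ x‖ ≤ ∫ g, ‖torusChar (Matrix.vecMul a₀ g) x‖ ∂μ := norm_integral_le_integral_norm _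
    _ = 1 := by simp only [norm_torusChar]; simp
  -- Step 1: t₀ ≤ ∫ ‖φ‖ dν
  have hT : Measurable fun p : Md × Td => torusAct p.1 p.2 :=
    measurable_uncurry_countable_fst (fun g x => torusAct g x)
      (fun g => (continuous_torusAct g).measurable)
  have step1 : t₀ ≤ ∫ x, ‖φ x‖ ∂ν := by
    have e1 : torusFourier ((μ.prod ν).map fun p => torusAct p.1 p.2) a₀ = ∫ x, φ x ∂ν := by
      rw [torusFourier, integral_map hT.aemeasurable
        (continuous_torusChar a₀).stronglyMeasurable.aestronglyMeasurable]
      simp_rw [torusChar_act]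
      exact integral_prod_symm _ (integrable_H a₀ μ ν)
    calc t₀ ≤ ‖torusFourier ((μ.prod ν).map fun p => torusAct p.1 p.2) a₀‖ := hbig
    _ = ‖∫ x, φ x ∂ν‖ := by rw [e1]
    _ ≤ ∫ x, ‖φ x‖ ∂ν := norm_integral_le_integral_norm _
  -- integrability of ‖φ‖ and ‖φ‖^(2k)
  have hφnormint : Integrable (fun x => ‖φ x‖) ν := by
    refine (integrable_const (1:ℝ)).mono' hφsm.norm.aestronglyMeasurable ?_
    exact Filter.Eventually.of_forall fun x => by simpa using hφ1 x
  have hφpowint : Integrable (fun x => ‖φ x‖ ^ (2 * k)) ν := by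
    refine (integrable_const (1:ℝ)).mono' (hφsm.norm.pow _).aestronglyMeasurable ?_
    refine Filter.Eventually.of_forall fun x => ?_
    rw [Real.norm_of_nonneg (by positivity)]
    exact pow_le_one₀ (norm_nonneg _) (hφ1 x)
  -- Step 2 (Jensen): t₀^(2k) ≤ ∫ ‖φ‖^(2k) dν
  have step2 : t₀ ^ (2 * k) ≤ ∫ x, ‖φ x‖ ^ (2 * k) ∂ν := by
    have hj := (convexOn_pow (2 * k) (𝕜 := ℝ)).map_integral_le
      (f := fun x => ‖φ x‖) (μ := ν)
      ((continuous_pow (2 * k)).continuousOn) isClosed_Ici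
      (Filter.Eventually.of_forall fun x => norm_nonneg _) hφnormint
      hφpowint
    calc t₀ ^ (2 * k) ≤ (∫ x, ‖φ x‖ ∂ν) ^ (2 * k) :=
          pow_le_pow_left₀ ht₀.le step1 _
    _ ≤ ∫ x, ‖φ x‖ ^ (2 * k) ∂ν := hj
  -- Step 3: pointwise identity ∫_g χ dSS = ‖φ x‖^(2k)
  have step3 : ∀ x, (∫ g, torusChar (Matrix.vecMul a₀ g) x ∂SS) =
      ((‖φ x‖ ^ (2 * k) : ℝ) : ℂ) := by
    intro x
    rw [hSS, psi_subConv, psi_pow]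
    have hz : φ x = ∫ g, torusChar (Matrix.vecMul a₀ g) x ∂μ := rfl
    rw [Complex.mul_conj', ← hz]
    norm_cast
    rw [norm_pow, ← pow_mul, mul_comm]
  -- Step 4: Fubini
  have step4 : ∫ x, (∫ g, torusChar (Matrix.vecMul a₀ g) x ∂SS) ∂ν =
      ∫ g, torusFourier ν (Matrix.vecMul a₀ g) ∂SS := by
    have := integral_integral_swap (f := fun (g : Md) (x : Td) =>
      torusChar (Matrix.vecMul a₀ g) x) (μ := SS) (ν := ν) (integrable_H a₀ SS ν)
    rw [← this]
    rfl
  have hat_int : Integrable (fun g => torusFourier ν (Matrix.vecMul a₀ g)) SS := by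
    refine (integrable_const (1:ℝ)).mono' (measurable_matFun _).aestronglyMeasurable ?_
    refine Filter.Eventually.of_forall fun g => ?_
    calc ‖torusFourier ν (Matrix.vecMul a₀ g)‖
        ≤ ∫ x, ‖torusChar (Matrix.vecMul a₀ g) x‖ ∂ν := norm_integral_le_integral_norm _
    _ = 1 := by simp only [norm_torusChar]; simp
  have hat_le1 : ∀ g : Md, ‖torusFourier ν (Matrix.vecMul a₀ g)‖ ≤ 1 := by
    intro g
    calc ‖torusFourier ν (Matrix.vecMul a₀ g)‖
        ≤ ∫ x, ‖torusChar (Matrix.vecMul a₀ g) x‖ ∂ν := norm_integral_le_integral_norm _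
    _ = 1 := by simp only [norm_torusChar]; simp
  -- Step 5: t₀^(2k) ≤ ∫ ‖hatν‖ dSS
  have step5 : t₀ ^ (2 * k) ≤ ∫ g, ‖torusFourier ν (Matrix.vecMul a₀ g)‖ ∂SS := by
    have e2 : (∫ x, ‖φ x‖ ^ (2 * k) ∂ν) =
        (∫ g, torusFourier ν (Matrix.vecMul a₀ g) ∂SS).re := by
      rw [← step4]
      simp_rw [step3]
      have hint : Integrable (fun x => ((‖φ x‖ ^ (2 * k) : ℝ) : ℂ)) ν := hφpowint.ofReal
      have h3 := Complex.reCLM.integral_comp_comm hint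
      simp only [Complex.reCLM_apply, Complex.ofReal_re] at h3
      exact h3
    calc t₀ ^ (2 * k) ≤ ∫ x, ‖φ x‖ ^ (2 * k) ∂ν := step2
    _ = (∫ g, torusFourier ν (Matrix.vecMul a₀ g) ∂SS).re := e2
    _ = ∫ g, (torusFourier ν (Matrix.vecMul a₀ g)).re ∂SS := by
        have h3 := Complex.reCLM.integral_comp_comm hat_int
        simp only [Complex.reCLM_apply] at h3
        exact h3.symm
    _ ≤ ∫ g, ‖torusFourier ν (Matrix.vecMul a₀ g)‖ ∂SS := by
        refine integral_mono hat_int.re hat_int.norm fun g => ?_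
        exact Complex.re_le_norm _
  -- Step 6: conclude
  set c := t₀ ^ (2 * k) / 2 with hc
  have hc0 : 0 < c := by positivity
  set A : Set Md := {g | c ≤ ‖torusFourier ν (Matrix.vecMul a₀ g)‖} with hA
  have hAm : MeasurableSet A := (Set.to_countable A).measurableSet
  have hbound : ∀ g : Md, ‖torusFourier ν (Matrix.vecMul a₀ g)‖ ≤
      A.indicator (fun _ => (1:ℝ)) g + c := by
    intro g
    by_cases hg : g ∈ A
    · rw [Set.indicator_of_mem hg]
      exact le_add_of_le_of_nonneg (hat_le1 g) hc0.le
    · rw [Set.indicator_of_notMem hg, zero_add]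
      exact le_of_not_ge hg
  have hind_int : Integrable (fun g => A.indicator (fun _ => (1:ℝ)) g + c) SS := by
    exact ((integrable_const (1:ℝ)).indicator hAm).add (integrable_const c)
  have step6 : t₀ ^ (2 * k) ≤ (SS A).toReal + c := by
    calc t₀ ^ (2 * k) ≤ ∫ g, ‖torusFourier ν (Matrix.vecMul a₀ g)‖ ∂SS := step5
    _ ≤ ∫ g, (A.indicator (fun _ => (1:ℝ)) g + c) ∂SS :=
        integral_mono hat_int.norm hind_int hbound
    _ = (SS A).toReal + c := by
        rw [integral_add ((integrable_const (1:ℝ)).indicator hAm) (integrable_const c),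
          integral_indicator_const _ hAm, integral_const]
        simp [measure_univ, Measure.real]
  have hfin : c ≤ (SS A).toReal := by
    have : t₀ ^ (2 * k) = c + c := by rw [hc]; ring
    linarith [step6, this ▸ step6]
  calc ENNReal.ofReal c ≤ ENNReal.ofReal ((SS A).toReal) := ENNReal.ofReal_le_ofReal hfin
  _ = SS A := ENNReal.ofReal_toReal (measure_ne_top _ _)
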